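/- Let E be a row-finite directed graph and H ⊆ E⁰ a hereditary, saturated subset. If E has distinct detours, then both the restriction graph E_H and the quotient graph E \ H have distinct detours. -/

import Mathlib

structure DirGraph where
  V : Type
  E : Type
  r : E → V
  s : E → V

namespace DirGraph
variable (G : DirGraph)

/-- A vertex is a source if no edge has it as range. -/
def IsSource (v : G.V) : Prop := ∀ e : G.E, G.r e ≠ v

/-- Finite directed paths, written right to left: `DPath G a b` is a path with
source `a` and range `b`; `cons e p` prepends the edge `e` at the range side. -/
inductive DPath : G.V → G.V → Type
  | nil (v : G.V) : DPath v v
  | cons (e : G.E) {a : G.V} (p : DPath a (G.s e)) : DPath a (G.r e)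

variable {G}

def DPath.length : {a b : G.V} → DPath G a b → ℕ
  | _, _, .nil _ => 0
  | _, _, .cons _ p => p.length + 1

/-- The list of vertices along a finite path (range first). -/
def DPath.vertices : {a b : G.V} → DPath G a b → List G.V
  | _, _, .nil v => [v]
  | _, _, .cons e p => G.r e :: p.vertices

/-- The list of edges of a finite path (range-side edge first). -/
def DPath.edges : {a b : G.V} → DPath G a b → List G.E
  | _, _, .nil _ => []
  | _, _, .cons e p => e :: p.edges

/-- A path is simple if no vertex repeats. -/
def DPath.Simple {a b : G.V} (p : DPath G a b) : Prop := p.vertices.Nodup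

/-- Infinite backwards paths `μ₁μ₂μ₃⋯` with `s (μ n) = r (μ (n+1))`. -/
structure InfPath (G : DirGraph) where
  edge : ℕ → G.E
  adj : ∀ n, G.s (edge n) = G.r (edge (n + 1))

def InfPath.range (μ : InfPath G) : G.V := G.r (μ.edge 0)
def InfPath.vertexSet (μ : InfPath G) : Set G.V := Set.range fun n => G.r (μ.edge n)
def InfPath.edgeSet (μ : InfPath G) : Set G.E := Set.range μ.edge
def InfPath.Simple (μ : InfPath G) : Prop := Function.Injective fun n => G.r (μ.edge n)

/-- A distinct detour for a finite path: a finite path with source and range on the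
given path, containing an edge not on it. -/
def DPath.HasDistinctDetour {a b : G.V} (μ : DPath G a b) : Prop :=
  ∃ (c d : G.V) (ν : DPath G c d), c ∈ μ.vertices ∧ d ∈ μ.vertices ∧
    ∃ e ∈ ν.edges, e ∉ μ.edges

/-- A distinct detour for an infinite path. -/
def InfPath.HasDistinctDetour (μ : InfPath G) : Prop :=
  ∃ (c d : G.V) (ν : DPath G c d), c ∈ μ.vertexSet ∧ d ∈ μ.vertexSet ∧
    ∃ e ∈ ν.edges, e ∉ μ.edgeSet

variable (G)

/-- `E` has distinct detours: every simple path in `E^{≤∞}` (finite paths starting at a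
source, or infinite backwards paths) admits a distinct detour. -/
def HasDistinctDetours : Prop :=
  (∀ (a b : G.V) (μ : DPath G a b), G.IsSource a → μ.Simple → μ.HasDistinctDetour) ∧
  (∀ μ : InfPath G, μ.Simple → μ.HasDistinctDetour)

/-- `E` has no cycles: there are no nontrivial finite paths from a vertex to itself. -/
def NoCycles : Prop := ∀ (v : G.V) (p : DPath G v v), p.length = 0

def RowFinite : Prop := ∀ v : G.V, {e : G.E | G.r e = v}.Finite

/-- `H` is hereditary: any vertex with a path to a vertex of `H` lies in `H`. -/
def Hereditary (H : Set G.V) : Prop := ∀ (a b : G.V), DPath G a b → b ∈ H → a ∈ H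

/-- `H` is saturated: a vertex receiving at least one edge, all of whose incoming
edges have source in `H`, lies in `H`. -/
def Saturated (H : Set G.V) : Prop :=
  ∀ v : G.V, (∃ e, G.r e = v) → (∀ e, G.r e = v → G.s e ∈ H) → v ∈ H

/-- The restriction graph `E_H`: vertices `H`, edges with range in `H`. -/
def restrict (H : Set G.V) (hH : G.Hereditary H) : DirGraph where
  V := {v : G.V // v ∈ H}
  E := {e : G.E // G.r e ∈ H}
  r := fun e => ⟨G.r e.1, e.2⟩
  s := fun e => ⟨G.s e.1, hH _ _ (.cons e.1 (.nil _)) e.2⟩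

/-- The quotient graph `E \ H`: vertices `E⁰ \ H`, edges with source outside `H`. -/
def quotientGraph (H : Set G.V) (hH : G.Hereditary H) : DirGraph where
  V := {v : G.V // v ∉ H}
  E := {e : G.E // G.s e ∉ H}
  r := fun e => ⟨G.r e.1, fun hr => e.2 (hH _ _ (.cons e.1 (.nil _)) hr)⟩
  s := fun e => ⟨G.s e.1, e.2⟩


section Aux

variable {G : DirGraph} {H : Set G.V} {hher : G.Hereditary H}

lemma proj_restrict {a b : (G.restrict H hher).V} (p : DPath (G.restrict H hher) a b) :
    ∃ q : DPath G a.1 b.1, q.vertices = p.vertices.map Subtype.val ∧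
      q.edges = p.edges.map Subtype.val := by
  induction p with
  | nil v => exact ⟨.nil v.1, rfl, rfl⟩
  | cons e p ih =>
    obtain ⟨q, hv, he⟩ := ih
    exact ⟨.cons e.1 q, (congrArg (G.r e.1 :: ·) hv :),
      (congrArg (e.1 :: ·) he :)⟩

lemma proj_quotient {a b : (G.quotientGraph H hher).V}
    (p : DPath (G.quotientGraph H hher) a b) :
    ∃ q : DPath G a.1 b.1, q.vertices = p.vertices.map Subtype.val ∧
      q.edges = p.edges.map Subtype.val := by
  induction p with
  | nil v => exact ⟨.nil v.1, rfl, rfl⟩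
  | cons e p ih =>
    obtain ⟨q, hv, he⟩ := ih
    exact ⟨.cons e.1 q, (congrArg (G.r e.1 :: ·) hv :),
      (congrArg (e.1 :: ·) he :)⟩

lemma lift_restrict {c d : G.V} (ν : DPath G c d) :
    ∀ hd : d ∈ H, ∃ hc : c ∈ H,
      ∃ ν' : DPath (G.restrict H hher) ⟨c, hc⟩ ⟨d, hd⟩,
        ν'.edges.map Subtype.val = ν.edges := by
  induction ν with
  | nil v => exact fun hd => ⟨hd, .nil _, rfl⟩
  | cons e p ih =>
    intro hd
    have hs : G.s e ∈ H := hher _ _ (.cons e (.nil _)) hd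
    obtain ⟨hc, p', hp'⟩ := ih hs
    refine ⟨hc, ?_, ?_⟩
    · exact DPath.cons (G := G.restrict H hher) (e := ⟨e, hd⟩) p'
    · exact congrArg (e :: ·) hp'

lemma lift_quotient {c d : G.V} (ν : DPath G c d) :
    ∀ (hc : c ∉ H) (hd : d ∉ H),
      ∃ ν' : DPath (G.quotientGraph H hher) ⟨c, hc⟩ ⟨d, hd⟩,
        ν'.edges.map Subtype.val = ν.edges := by
  induction ν with
  | nil v => exact fun hc hd => ⟨.nil _, rfl⟩
  | cons e p ih =>
    intro hc hd
    have hs : G.s e ∉ H := fun h => hc (hher _ _ p h)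
    obtain ⟨p', hp'⟩ := ih hc hs
    refine ⟨?_, ?_⟩
    · exact DPath.cons (G := G.quotientGraph H hher) (e := ⟨e, hs⟩) p'
    · exact congrArg (e :: ·) hp'

/-- Project an infinite path in the restriction graph to `G`. -/
def InfPath.projR (μ : InfPath (G.restrict H hher)) : InfPath G where
  edge n := (μ.edge n).1
  adj n := congrArg Subtype.val (μ.adj n)

/-- Project an infinite path in the quotient graph to `G`. -/
def InfPath.projQ (μ : InfPath (G.quotientGraph H hher)) : InfPath G where
  edge n := (μ.edge n).1
  adj n := congrArg Subtype.val (μ.adj n)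

end Aux

end DirGraph

open DirGraph in
/-- if a row-finite graph `E` has distinct detours and `H` is hereditary and
saturated, then both `E_H` and `E \ H` have distinct detours. -/
theorem restrict_quotient_hasDistinctDetours (G : DirGraph) (hrow : G.RowFinite)
    (H : Set G.V) (hher : G.Hereditary H) (hsat : G.Saturated H)
    (hdd : G.HasDistinctDetours) :
    (G.restrict H hher).HasDistinctDetours ∧ (G.quotientGraph H hher).HasDistinctDetours := by
  constructor
  · -- restriction graph
    constructor
    · intro a b μ hsrc hsimp
      obtain ⟨q, hqv, hqe⟩ := proj_restrict μ
      have hsrcG : G.IsSource a.1 := by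
        intro e he
        exact hsrc ⟨e, he ▸ a.2⟩ (Subtype.ext he)
      have hqsimp : q.Simple := by
        rw [DPath.Simple, hqv]
        exact hsimp.map Subtype.val_injective
      obtain ⟨c, d, ν, hc, hd, e, heν, heμ⟩ := hdd.1 a.1 b.1 q hsrcG hqsimp
      rw [hqv] at hc hd
      rw [hqe] at heμ
      obtain ⟨c', hc', hcval⟩ := List.mem_map.mp hc
      obtain ⟨d', hd', hdval⟩ := List.mem_map.mp hd
      obtain ⟨hcH, ν', hν'⟩ := lift_restrict (hher := hher) ν (hdval ▸ d'.2)
      refine ⟨⟨c, hcH⟩, ⟨d, hdval ▸ d'.2⟩, ν', ?_, ?_, ?_⟩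
      · rwa [show (⟨c, hcH⟩ : (G.restrict H hher).V) = c' from Subtype.ext hcval.symm]
      · rwa [show (⟨d, hdval ▸ d'.2⟩ : (G.restrict H hher).V) = d' from Subtype.ext hdval.symm]
      · rw [← hν'] at heν
        obtain ⟨e₀, he₀, he₀val⟩ := List.mem_map.mp heν
        exact ⟨e₀, he₀, fun h => heμ (he₀val ▸ List.mem_map_of_mem (f := Subtype.val) h)⟩
    · intro μ hsimp
      obtain ⟨c, d, ν, hc, hd, e, heν, heμ⟩ :=
        hdd.2 (InfPath.projR (hher := hher) μ) (fun m n h => hsimp (Subtype.ext h))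
      obtain ⟨m, hm⟩ := hc
      obtain ⟨n, hn⟩ := hd
      have hcH : c ∈ H := hm ▸ ((G.restrict H hher).r (μ.edge m)).2
      have hdH : d ∈ H := hn ▸ ((G.restrict H hher).r (μ.edge n)).2
      obtain ⟨hcH', ν', hν'⟩ := lift_restrict (hher := hher) ν hdH
      refine ⟨⟨c, hcH'⟩, ⟨d, hdH⟩, ν', ⟨m, Subtype.ext hm⟩, ⟨n, Subtype.ext hn⟩, ?_⟩
      rw [← hν'] at heν
      obtain ⟨e₀, he₀, he₀val⟩ := List.mem_map.mp heν
      exact ⟨e₀, he₀, fun ⟨k, hk⟩ => heμ ⟨k, he₀val ▸ congrArg Subtype.val hk⟩⟩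
  · -- quotient graph
    constructor
    · intro a b μ hsrc hsimp
      obtain ⟨q, hqv, hqe⟩ := proj_quotient μ
      have hsrcG : G.IsSource a.1 := by
        intro e he
        apply a.2
        refine hsat a.1 ⟨e, he⟩ ?_
        intro f hf
        by_contra hfH
        exact hsrc ⟨f, hfH⟩ (Subtype.ext hf)
      have hqsimp : q.Simple := by
        rw [DPath.Simple, hqv]
        exact hsimp.map Subtype.val_injective
      obtain ⟨c, d, ν, hc, hd, e, heν, heμ⟩ := hdd.1 a.1 b.1 q hsrcG hqsimp
      rw [hqv] at hc hd
      rw [hqe] at heμ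
      obtain ⟨c', hc', hcval⟩ := List.mem_map.mp hc
      obtain ⟨d', hd', hdval⟩ := List.mem_map.mp hd
      obtain ⟨ν', hν'⟩ := lift_quotient (hher := hher) ν (hcval ▸ c'.2) (hdval ▸ d'.2)
      refine ⟨⟨c, hcval ▸ c'.2⟩, ⟨d, hdval ▸ d'.2⟩, ν', ?_, ?_, ?_⟩
      · rwa [show (⟨c, hcval ▸ c'.2⟩ : (G.quotientGraph H hher).V) = c' from Subtype.ext hcval.symm]
      · rwa [show (⟨d, hdval ▸ d'.2⟩ : (G.quotientGraph H hher).V) = d' from Subtype.ext hdval.symm]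
      · rw [← hν'] at heν
        obtain ⟨e₀, he₀, he₀val⟩ := List.mem_map.mp heν
        exact ⟨e₀, he₀, fun h => heμ (he₀val ▸ List.mem_map_of_mem (f := Subtype.val) h)⟩
    · intro μ hsimp
      obtain ⟨c, d, ν, hc, hd, e, heν, heμ⟩ :=
        hdd.2 (InfPath.projQ (hher := hher) μ) (fun m n h => hsimp (Subtype.ext h))
      obtain ⟨m, hm⟩ := hc
      obtain ⟨n, hn⟩ := hd
      have hcH : c ∉ H := hm ▸ ((G.quotientGraph H hher).r (μ.edge m)).2
      have hdH : d ∉ H := hn ▸ ((G.quotientGraph H hher).r (μ.edge n)).2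
      obtain ⟨ν', hν'⟩ := lift_quotient (hher := hher) ν hcH hdH
      refine ⟨⟨c, hcH⟩, ⟨d, hdH⟩, ν', ⟨m, Subtype.ext hm⟩, ⟨n, Subtype.ext hn⟩, ?_⟩
      rw [← hν'] at heν
      obtain ⟨e₀, he₀, he₀val⟩ := List.mem_map.mp heν
      exact ⟨e₀, he₀, fun ⟨k, hk⟩ => heμ ⟨k, he₀val ▸ congrArg Subtype.val hk⟩⟩
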